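/- Let S be a discrete valuation ring with residue field k and fraction field K, let C be a finite free S-module, and let ∂ : C → C be an S-linear map with ∂ ∘ ∂ = 0. Write H = ker(∂)/range(∂). Then dim_k ( ker(∂_k)/range(∂_k) ) = dim_K ( ker(∂_K)/range(∂_K) ) if and only if H is a torsion-free S-module (equivalently, H is a free S-module), where ∂_k and ∂_K are the base changes of ∂ to C ⊗_S k and C ⊗_S K. -/

import Mathlib

/-- The homology of a differential module `(C, ∂)`: `ker ∂` modulo `range ∂`
(pulled back to a submodule of `ker ∂`). -/
noncomputable def homologyOf {S C : Type*} [CommRing S] [AddCommGroup C] [Module S C]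
    (d : C →ₗ[S] C) : Type _ :=
  (LinearMap.ker d) ⧸ ((LinearMap.range d).comap (LinearMap.ker d).subtype)

noncomputable instance {S C : Type*} [CommRing S] [AddCommGroup C] [Module S C]
    (d : C →ₗ[S] C) : AddCommGroup (homologyOf d) :=
  inferInstanceAs (AddCommGroup
    ((LinearMap.ker d) ⧸ ((LinearMap.range d).comap (LinearMap.ker d).subtype)))

noncomputable instance {S C : Type*} [CommRing S] [AddCommGroup C] [Module S C]
    (d : C →ₗ[S] C) : Module S (homologyOf d) :=
  inferInstanceAs (Module S
    ((LinearMap.ker d) ⧸ ((LinearMap.range d).comap (LinearMap.ker d).subtype)))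

private lemma homologyOf_finrank_field {F V : Type*} [Field F] [AddCommGroup V] [Module F V]
    [FiniteDimensional F V] (e : V →ₗ[F] V) (he : e ∘ₗ e = 0) :
    Module.finrank F (homologyOf e) + 2 * Module.finrank F (LinearMap.range e)
      = Module.finrank F V := by
  have hle : LinearMap.range e ≤ LinearMap.ker e := by
    rintro x ⟨y, rfl⟩
    simpa [LinearMap.mem_ker] using LinearMap.congr_fun he y
  have h1 : Module.finrank F (homologyOf e)
      + Module.finrank F ((LinearMap.range e).comap (LinearMap.ker e).subtype)
      = Module.finrank F (LinearMap.ker e) :=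
    Submodule.finrank_quotient_add_finrank _
  have h2 : Module.finrank F ((LinearMap.range e).comap (LinearMap.ker e).subtype)
      = Module.finrank F (LinearMap.range e) :=
    LinearEquiv.finrank_eq (Submodule.comapSubtypeEquivOfLe hle)
  have h3 := LinearMap.finrank_range_add_finrank_ker e
  have h4 : Module.finrank F (LinearMap.range e) ≤ Module.finrank F (LinearMap.ker e) :=
    Submodule.finrank_mono hle
  omega

private lemma range_baseChange_factor {S C : Type*} [CommRing S] [AddCommGroup C] [Module S C]
    (d : C →ₗ[S] C) (F : Type*) [CommRing F] [Algebra S F] :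
    LinearMap.range (d.baseChange F)
      = LinearMap.range ((LinearMap.range d).subtype.baseChange F) := by
  have hsurj : Function.Surjective
      ⇑((d.codRestrict (LinearMap.range d) (LinearMap.mem_range_self d)).baseChange F) := by
    rw [LinearMap.baseChange_eq_ltensor]
    exact LinearMap.lTensor_surjective F
      (fun y => ⟨y.2.choose, Subtype.ext y.2.choose_spec⟩)
  conv_lhs => rw [← LinearMap.subtype_comp_codRestrict d (LinearMap.range d)
      (LinearMap.mem_range_self d)]
  rw [LinearMap.baseChange_comp]
  exact LinearMap.range_comp_of_range_eq_top _ (LinearMap.range_eq_top.mpr hsurj)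

private lemma m_add_eq {S C : Type*} [CommRing S] [Nontrivial S] [AddCommGroup C] [Module S C]
    (d : C →ₗ[S] C) (F : Type*) [Field F] [Algebra S F]
    [Module.Free S (LinearMap.range d)] [Module.Finite S (LinearMap.range d)]
    [Module.Finite S C] :
    Module.finrank F (LinearMap.range (d.baseChange F))
      + Module.finrank F (LinearMap.ker ((LinearMap.range d).subtype.baseChange F))
      = Module.finrank S (LinearMap.range d) := by
  rw [range_baseChange_factor d F]
  have := LinearMap.finrank_range_add_finrank_ker ((LinearMap.range d).subtype.baseChange F)
  rwa [Module.finrank_baseChange] at this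

theorem stmt10 {S : Type*} [CommRing S] [IsDomain S] [IsDiscreteValuationRing S]
    {C : Type*} [AddCommGroup C] [Module S C] [Module.Free S C] [Module.Finite S C]
    (d : C →ₗ[S] C) (hd : d ∘ₗ d = 0) :
    (Module.finrank (IsLocalRing.ResidueField S)
        (homologyOf (LinearMap.baseChange (IsLocalRing.ResidueField S) d)) =
      Module.finrank (FractionRing S)
        (homologyOf (LinearMap.baseChange (FractionRing S) d)) ↔
      Submodule.torsion S (homologyOf d) = ⊥) ∧
    (Submodule.torsion S (homologyOf d) = ⊥ ↔ Module.Free S (homologyOf d)) := by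
  haveI : Module.Finite S (homologyOf d) :=
    inferInstanceAs (Module.Finite S
      ((LinearMap.ker d) ⧸ ((LinearMap.range d).comap (LinearMap.ker d).subtype)))
  have hBZ : LinearMap.range d ≤ LinearMap.ker d := by
    rintro x ⟨y, rfl⟩
    simpa [LinearMap.mem_ker] using LinearMap.congr_fun hd y
  -- second iff
  have tor_iff_free : Submodule.torsion S (homologyOf d) = ⊥ ↔ Module.Free S (homologyOf d) := by
    constructor
    · intro h
      haveI : Module.IsTorsionFree S (homologyOf d) :=
        Submodule.isTorsionFree_iff_torsion_eq_bot.mpr h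
      exact Module.free_of_finite_type_torsion_free'
    · intro h
      haveI := h
      exact Submodule.isTorsionFree_iff_torsion_eq_bot.mp inferInstance
  -- split implies torsion-free
  have hPtor : (∃ g : C →ₗ[S] (LinearMap.range d),
      g ∘ₗ (LinearMap.range d).subtype = LinearMap.id) →
      Submodule.torsion S (homologyOf d) = ⊥ := by
    rintro ⟨g, hg⟩
    rw [eq_bot_iff]
    rintro x hx
    obtain ⟨a, ha⟩ := (Submodule.mem_torsion_iff x).mp hx
    obtain ⟨z, rfl⟩ := Submodule.Quotient.mk_surjective
      ((LinearMap.range d).comap (LinearMap.ker d).subtype) x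
    refine (Submodule.mem_bot S).mpr ?_
    have ha2 : (Submodule.Quotient.mk (a • z) : homologyOf d) = 0 := by
      rw [Submodule.Quotient.mk_smul]; exact ha
    rw [Submodule.Quotient.mk_eq_zero] at ha2
    have hmem : (a : S) • (z : C) ∈ LinearMap.range d := by
      exact Submodule.mem_comap.mp ha2
    have hgb : g ((LinearMap.range d).subtype ⟨(a : S) • (z : C), hmem⟩)
        = ⟨(a : S) • (z : C), hmem⟩ := LinearMap.congr_fun hg ⟨(a : S) • (z : C), hmem⟩
    have h1 : ((g ((a : S) • (z : C))) : C) = (a : S) • (z : C) :=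
      congrArg Subtype.val hgb
    have h2 : (a : S) • ((g (z : C)) : C) = (a : S) • (z : C) := by
      rw [← Submodule.coe_smul, ← map_smul]; exact h1
    have hz : (z : C) = ((g (z : C)) : C) :=
      (smul_right_injective C (nonZeroDivisors.coe_ne_zero a) h2).symm
    change (Submodule.Quotient.mk z : (LinearMap.ker d) ⧸ ((LinearMap.range d).comap (LinearMap.ker d).subtype)) = 0
    rw [Submodule.Quotient.mk_eq_zero]
    exact Submodule.mem_comap.mpr (by rw [Submodule.subtype_apply, hz]; exact (g (z : C)).2)
  haveI : Module.IsTorsionFree S C := inferInstance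
  have htorP : Submodule.torsion S (homologyOf d) = ⊥ →
      (∃ g : C →ₗ[S] (LinearMap.range d),
        g ∘ₗ (LinearMap.range d).subtype = LinearMap.id) := by
    intro htor
    -- C ⧸ range d is torsion free
    have hCB : Submodule.torsion S (C ⧸ LinearMap.range d) = ⊥ := by
      rw [eq_bot_iff]
      rintro x hx
      obtain ⟨a, ha⟩ := (Submodule.mem_torsion_iff x).mp hx
      obtain ⟨c, rfl⟩ := Submodule.Quotient.mk_surjective (LinearMap.range d) x
      rw [Submodule.mem_bot]
      have ha2 : (a : S) • c ∈ LinearMap.range d := by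
        rwa [← Submodule.Quotient.mk_eq_zero, Submodule.Quotient.mk_smul]
      have hdc : c ∈ LinearMap.ker d := by
        have h1 : d ((a : S) • c) = 0 := hBZ ha2
        rw [map_smul] at h1
        rw [LinearMap.mem_ker]
        exact (smul_eq_zero.mp h1).resolve_left (nonZeroDivisors.coe_ne_zero a)
      have hmemH : (Submodule.Quotient.mk (⟨c, hdc⟩ : LinearMap.ker d) : homologyOf d)
          ∈ Submodule.torsion S (homologyOf d) := by
        refine (Submodule.mem_torsion_iff (M := homologyOf d) _).mpr ⟨a, ?_⟩
        change (a • (Submodule.Quotient.mk ⟨c, hdc⟩ : (LinearMap.ker d) ⧸ ((LinearMap.range d).comap (LinearMap.ker d).subtype))) = 0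
        rw [← Submodule.Quotient.mk_smul, Submodule.Quotient.mk_eq_zero]
        exact Submodule.mem_comap.mpr (by exact ha2)
      rw [htor] at hmemH
      replace hmemH := (Submodule.mem_bot S (M := homologyOf d)).mp hmemH
      change (Submodule.Quotient.mk ⟨c, hdc⟩ : (LinearMap.ker d) ⧸ ((LinearMap.range d).comap (LinearMap.ker d).subtype)) = 0 at hmemH
      rw [Submodule.Quotient.mk_eq_zero] at hmemH ⊢
      simpa using Submodule.mem_comap.mp hmemH
    haveI : Module.IsTorsionFree S (C ⧸ LinearMap.range d) :=
      Submodule.isTorsionFree_iff_torsion_eq_bot.mpr hCB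
    haveI : Module.Free S (C ⧸ LinearMap.range d) := Module.free_of_finite_type_torsion_free'
    obtain ⟨s, hs⟩ := Module.projective_lifting_property (LinearMap.range d).mkQ LinearMap.id
      (Submodule.mkQ_surjective _)
    have hmem : ∀ c : C, c - s ((LinearMap.range d).mkQ c) ∈ LinearMap.range d := by
      intro c
      have : (LinearMap.range d).mkQ (c - s ((LinearMap.range d).mkQ c)) = 0 := by
        rw [map_sub]
        have := LinearMap.congr_fun hs ((LinearMap.range d).mkQ c)
        simp only [LinearMap.comp_apply, LinearMap.id_apply] at this
        rw [this, sub_self]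
      rwa [← LinearMap.mem_ker, Submodule.ker_mkQ] at this
    refine ⟨LinearMap.codRestrict (LinearMap.range d)
      (LinearMap.id - s ∘ₗ (LinearMap.range d).mkQ) hmem, ?_⟩
    ext b
    have hb0 : (Submodule.Quotient.mk (b : C) : C ⧸ LinearMap.range d) = 0 :=
      (Submodule.Quotient.mk_eq_zero _).mpr b.2
    simp [LinearMap.codRestrict, hb0]
  haveI : Module.Finite S (LinearMap.range d) := inferInstance
  haveI : Module.Free S (LinearMap.range d) := Module.free_of_finite_type_torsion_free'
  have hdk : d.baseChange (IsLocalRing.ResidueField S)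
      ∘ₗ d.baseChange (IsLocalRing.ResidueField S) = 0 := by
    rw [← LinearMap.baseChange_comp, hd]; ext x; simp
  have hdK : d.baseChange (FractionRing S) ∘ₗ d.baseChange (FractionRing S) = 0 := by
    rw [← LinearMap.baseChange_comp, hd]; ext x; simp
  have hk := homologyOf_finrank_field (d.baseChange (IsLocalRing.ResidueField S)) hdk
  rw [Module.finrank_baseChange] at hk
  have hK := homologyOf_finrank_field (d.baseChange (FractionRing S)) hdK
  rw [Module.finrank_baseChange] at hK
  have hmk := m_add_eq d (IsLocalRing.ResidueField S)
  have hmK := m_add_eq d (FractionRing S)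
  have hinjK : Function.Injective
      ⇑((LinearMap.range d).subtype.baseChange (FractionRing S)) := by
    rw [LinearMap.baseChange_eq_ltensor]
    exact Module.Flat.lTensor_preserves_injective_linearMap _ Subtype.val_injective
  have heK : Module.finrank (FractionRing S)
      (LinearMap.ker ((LinearMap.range d).subtype.baseChange (FractionRing S))) = 0 := by
    rw [Submodule.finrank_eq_zero]
    exact LinearMap.ker_eq_bot.mpr hinjK
  have hiff1 : Submodule.torsion S (homologyOf d) = ⊥ ↔
      Module.finrank (IsLocalRing.ResidueField S)
        (LinearMap.ker ((LinearMap.range d).subtype.baseChange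
          (IsLocalRing.ResidueField S))) = 0 := by
    rw [Submodule.finrank_eq_zero, LinearMap.ker_eq_bot, LinearMap.baseChange_eq_ltensor]
    have hsplit := IsLocalRing.split_injective_iff_lTensor_residueField_injective
      (LinearMap.range d).subtype
    constructor
    · intro h; exact hsplit.mp (htorP h)
    · intro h; exact hPtor (hsplit.mpr h)
  constructor
  · rw [hiff1]; omega
  · exact tor_iff_free
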